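/- Consider the operator T on E = ℂ ⊕ ℓ¹-⊕_{n≥1} ℂ^d defined by T = S + e⊗q + q⊗e, where S is the block diagonal operator with blocks 0 (on the ℂ component) and (1-q_n)P (on the n-th ℂ^d component), P a d×d cyclic-block permutation matrix with P𝟙 = 𝟙, e = (1,0,0,…), q = (0, q_1𝟙, q_2𝟙, …), and q_n ∈ (0,1/2] with Σ d q_n = 1. Then for every λ on the unit circle that is not in the spectrum of P, λ is in the resolvent set of T. -/

import Mathlib

namespace PerturbedBlockAux

lemma norm_comp_perm {d : ℕ} (σ : Equiv.Perm (Fin d)) (v : Fin d → ℂ) :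
    ‖v ∘ ⇑σ‖ = ‖v‖ := by
  have h1 : ∀ (τ : Equiv.Perm (Fin d)) (w : Fin d → ℂ), ‖w ∘ ⇑τ‖ ≤ ‖w‖ := fun τ w =>
    (pi_norm_le_iff_of_nonneg (norm_nonneg w)).2 fun i => norm_le_pi_norm w (τ i)
  refine le_antisymm (h1 σ v) ?_
  have h2 : v = (v ∘ ⇑σ) ∘ ⇑σ.symm := by funext i; simp
  calc ‖v‖ = ‖(v ∘ ⇑σ) ∘ ⇑σ.symm‖ := by rw [← h2]
    _ ≤ ‖v ∘ ⇑σ‖ := h1 σ.symm _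

lemma mulVec_norm_le {d : ℕ} (N : Matrix (Fin d) (Fin d) ℂ) (w : Fin d → ℂ) :
    ‖N.mulVec w‖ ≤ (∑ i, ∑ j, ‖N i j‖) * ‖w‖ := by
  have hnn : (0:ℝ) ≤ (∑ i, ∑ j, ‖N i j‖) * ‖w‖ :=
    mul_nonneg (Finset.sum_nonneg fun i _ => Finset.sum_nonneg fun j _ => norm_nonneg _)
      (norm_nonneg _)
  refine (pi_norm_le_iff_of_nonneg hnn).2 fun i => ?_
  calc ‖N.mulVec w i‖ = ‖∑ j, N i j * w j‖ := rfl
    _ ≤ ∑ j, ‖N i j * w j‖ := norm_sum_le _ _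
    _ = ∑ j, ‖N i j‖ * ‖w j‖ := by simp [norm_mul]
    _ ≤ ∑ j, ‖N i j‖ * ‖w‖ := Finset.sum_le_sum fun j _ =>
        mul_le_mul_of_nonneg_left (norm_le_pi_norm w j) (norm_nonneg _)
    _ = (∑ j, ‖N i j‖) * ‖w‖ := by rw [Finset.sum_mul]
    _ ≤ (∑ i, ∑ j, ‖N i j‖) * ‖w‖ := by
        refine mul_le_mul_of_nonneg_right ?_ (norm_nonneg _)
        exact Finset.single_le_sum (fun i _ => Finset.sum_nonneg fun j _ => norm_nonneg _)
          (Finset.mem_univ i)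

end PerturbedBlockAux

set_option maxHeartbeats 2000000 in
open PerturbedBlockAux in
/-- Consider the operator `T = S + e⊗q + q⊗e` of Construction 2.1 on
`E = ℂ ⊕ (⊕_{ℓ¹, n ≥ 1} ℂ^d)`, given by
`T(f_0, f_1, f_2, …) = (Σ_n q_n⟨𝟙,f_n⟩, (1-q_1)Pf_1 + f_0 q_1 𝟙, (1-q_2)Pf_2 + f_0 q_2 𝟙, …)`,
where `P` is a permutation matrix with `P𝟙 = 𝟙` and `q_n ∈ (0,1/2]` with `Σ_n d·q_n = 1`.
Then every unimodular `λ` which is not in the spectrum of `P` lies in the resolvent set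
of `T`. -/
theorem unimodular_not_in_spectrum_of_perturbed_block_operator
    (d : ℕ) [NeZero d] (P : Matrix (Fin d) (Fin d) ℂ)
    (hPperm : ∃ σ : Equiv.Perm (Fin d), ∀ i j, P i j = if i = σ j then 1 else 0)
    (hP1 : P.mulVec (fun _ => (1 : ℂ)) = fun _ => 1)
    (q : ℕ → ℝ) (hq : ∀ n, q n ∈ Set.Ioc (0 : ℝ) (1 / 2))
    (htot : ∑' n : ℕ, (d : ℝ) * q n = 1)
    (T : (ℂ × lp (fun _ : ℕ => Fin d → ℂ) 1) →L[ℂ] (ℂ × lp (fun _ : ℕ => Fin d → ℂ) 1))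
    (hT : ∀ f : ℂ × lp (fun _ : ℕ => Fin d → ℂ) 1,
      (T f).1 = (∑' n : ℕ, (q n : ℂ) * ∑ j, (f.2 : ∀ _ : ℕ, Fin d → ℂ) n j) ∧
      ∀ n : ℕ, ((T f).2 : ∀ _ : ℕ, Fin d → ℂ) n
        = (1 - (q n : ℂ)) • P.mulVec ((f.2 : ∀ _ : ℕ, Fin d → ℂ) n)
          + f.1 • (q n : ℂ) • (fun _ : Fin d => (1 : ℂ)))
    (lam : ℂ) (hlam : ‖lam‖ = 1) (hspec : lam ∉ spectrum ℂ P) :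
    lam ∈ resolventSet ℂ T := by
  classical
  obtain ⟨σ, hσ⟩ := hPperm
  have hd0 : (d : ℝ) ≠ 0 := Nat.cast_ne_zero.2 (NeZero.ne d)
  have i0 : Fin d := ⟨0, Nat.pos_of_ne_zero (NeZero.ne d)⟩
  set ones : Fin d → ℂ := fun _ => 1 with honesdef
  have honesnorm : ‖ones‖ = 1 := by
    refine le_antisymm ((pi_norm_le_iff_of_nonneg zero_le_one).2 fun i => by simp [honesdef]) ?_
    simpa [honesdef] using norm_le_pi_norm ones i0
  -- mulVec of P is composition with σ.symm
  have hmul : ∀ v : Fin d → ℂ, P.mulVec v = v ∘ ⇑σ.symm := by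
    intro v; funext i
    simp only [Matrix.mulVec, dotProduct, hσ, Function.comp_apply]
    rw [Finset.sum_eq_single (σ.symm i)]
    · simp
    · intro j _ hj
      rw [if_neg, zero_mul]
      intro h
      exact hj (by rw [h, Equiv.symm_apply_apply])
    · simp
  -- 1 is in the spectrum of P
  have h1spec : (1:ℂ) ∈ spectrum ℂ P := by
    rw [spectrum.mem_iff]
    rintro ⟨u, hu⟩
    have h0 : ((u : Matrix (Fin d) (Fin d) ℂ)).mulVec ones = 0 := by
      rw [hu, Matrix.sub_mulVec, honesdef, hP1, map_one, Matrix.one_mulVec]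
      exact sub_self _
    have hz : ones = 0 := by
      have hcongr := congrArg (fun A => Matrix.mulVec A ones) (u.inv_mul)
      rw [← Matrix.mulVec_mulVec, h0, Matrix.mulVec_zero, Matrix.one_mulVec] at hcongr
      exact hcongr.symm
    exact one_ne_zero (congrFun hz i0)
  have hlam1 : lam ≠ 1 := fun h => hspec (h ▸ h1spec)
  -- quantitative invertibility of lam - P
  obtain ⟨u, hu⟩ : IsUnit (algebraMap ℂ (Matrix (Fin d) (Fin d) ℂ) lam - P) :=
    spectrum.notMem_iff.mp hspec
  set N : Matrix (Fin d) (Fin d) ℂ := ↑u⁻¹ with hN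
  set M : ℝ := (∑ i, ∑ j, ‖N i j‖) + 1 with hM
  have hM1 : (1:ℝ) ≤ M := by
    have : (0:ℝ) ≤ ∑ i, ∑ j, ‖N i j‖ :=
      Finset.sum_nonneg fun i _ => Finset.sum_nonneg fun j _ => norm_nonneg _
    simp only [hM]; linarith
  have huv : ∀ v : Fin d → ℂ, (u : Matrix (Fin d) (Fin d) ℂ).mulVec v
      = lam • v - v ∘ ⇑σ.symm := by
    intro v
    rw [hu, Matrix.sub_mulVec, hmul, Algebra.algebraMap_eq_smul_one,
      Matrix.smul_mulVec, Matrix.one_mulVec]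
  have key0 : ∀ v : Fin d → ℂ, ‖v‖ ≤ M * ‖lam • v - v ∘ ⇑σ.symm‖ := by
    intro v
    have hv : v = N.mulVec ((u : Matrix (Fin d) (Fin d) ℂ).mulVec v) := by
      rw [Matrix.mulVec_mulVec, hN, u.inv_mul, Matrix.one_mulVec]
    calc ‖v‖ = ‖N.mulVec ((u : Matrix (Fin d) (Fin d) ℂ).mulVec v)‖ := by rw [← hv]
      _ ≤ (∑ i, ∑ j, ‖N i j‖) * ‖(u : Matrix (Fin d) (Fin d) ℂ).mulVec v‖ :=
          mulVec_norm_le _ _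
      _ ≤ M * ‖lam • v - v ∘ ⇑σ.symm‖ := by
          rw [huv]
          exact mul_le_mul_of_nonneg_right (by simp only [hM]; linarith) (norm_nonneg _)
  set C : ℝ := 2 * M with hC
  have hC0 : (0:ℝ) < C := by simp only [hC]; linarith
  -- uniform resolvent bound for all the blocks
  have key : ∀ n (v : Fin d → ℂ),
      ‖v‖ ≤ C * ‖lam • v - ((1:ℂ) - (q n : ℂ)) • (v ∘ ⇑σ.symm)‖ := by
    intro n v
    obtain ⟨hq0, hq2⟩ := hq n
    have hwn : ‖v ∘ ⇑σ.symm‖ = ‖v‖ := norm_comp_perm σ.symm v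
    have hnqn : ‖((1:ℂ) - (q n : ℂ))‖ = 1 - q n := by
      rw [show ((1:ℂ) - (q n : ℂ)) = ((1 - q n : ℝ) : ℂ) by push_cast; ring,
        Complex.norm_real, Real.norm_eq_abs, abs_of_nonneg (by linarith)]
    have hqn : ‖((q n : ℝ) : ℂ)‖ = q n := by
      rw [Complex.norm_real, Real.norm_eq_abs, abs_of_nonneg hq0.le]
    by_cases hcase : q n * M ≤ 1/2
    · have hsplit : lam • v - v ∘ ⇑σ.symm
          = (lam • v - ((1:ℂ) - (q n : ℂ)) • (v ∘ ⇑σ.symm)) - ((q n : ℂ)) • (v ∘ ⇑σ.symm) := by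
        rw [sub_sub, ← add_smul, show ((1:ℂ) - (q n : ℂ) + (q n : ℂ)) = 1 by ring, one_smul]
      have h1 : ‖lam • v - v ∘ ⇑σ.symm‖
          ≤ ‖lam • v - ((1:ℂ) - (q n : ℂ)) • (v ∘ ⇑σ.symm)‖ + q n * ‖v‖ := by
        rw [hsplit]
        refine (norm_sub_le _ _).trans ?_
        rw [norm_smul, hqn, hwn]
      have h2 := key0 v
      have h3 : M * ‖lam • v - v ∘ ⇑σ.symm‖
          ≤ M * (‖lam • v - ((1:ℂ) - (q n : ℂ)) • (v ∘ ⇑σ.symm)‖ + q n * ‖v‖) :=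
        mul_le_mul_of_nonneg_left h1 (by linarith)
      have h4 : q n * M * ‖v‖ ≤ (1/2) * ‖v‖ :=
        mul_le_mul_of_nonneg_right hcase (norm_nonneg v)
      simp only [hC]
      nlinarith [norm_nonneg (lam • v - ((1:ℂ) - (q n : ℂ)) • (v ∘ ⇑σ.symm)), norm_nonneg v]
    · push_neg at hcase
      have h1 : q n * ‖v‖ ≤ ‖lam • v - ((1:ℂ) - (q n : ℂ)) • (v ∘ ⇑σ.symm)‖ := by
        have h5 := norm_sub_norm_le (lam • v) (((1:ℂ) - (q n : ℂ)) • (v ∘ ⇑σ.symm))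
        rw [norm_smul, hlam, one_mul, norm_smul, hnqn, hwn] at h5
        nlinarith [norm_nonneg v]
      simp only [hC]
      nlinarith [norm_nonneg v, norm_nonneg (lam • v - ((1:ℂ) - (q n : ℂ)) • (v ∘ ⇑σ.symm))]
  -- the block operators and their inverses
  set A : ℕ → ((Fin d → ℂ) →ₗ[ℂ] (Fin d → ℂ)) := fun n =>
    lam • LinearMap.id - ((1:ℂ) - (q n : ℂ)) • LinearMap.funLeft ℂ ℂ ⇑σ.symm with hA
  have hAapp : ∀ n v, A n v = lam • v - ((1:ℂ) - (q n : ℂ)) • (v ∘ ⇑σ.symm) := by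
    intro n v
    simp [hA, LinearMap.funLeft_apply]
    rfl
  have hAinj : ∀ n, Function.Injective (A n) := by
    intro n
    rw [← LinearMap.ker_eq_bot, LinearMap.ker_eq_bot']
    intro v hv
    have h := key n v
    rw [← hAapp, hv, norm_zero, mul_zero] at h
    exact norm_le_zero_iff.mp h
  have hAbij : ∀ n, Function.Bijective (A n) := fun n =>
    ⟨hAinj n, (LinearMap.injective_iff_surjective).mp (hAinj n)⟩
  set Req : ℕ → ((Fin d → ℂ) ≃ₗ[ℂ] (Fin d → ℂ)) := fun n =>
    LinearEquiv.ofBijective (A n) (hAbij n) with hReq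
  set R : ℕ → ((Fin d → ℂ) → (Fin d → ℂ)) := fun n => ⇑(Req n).symm with hR
  have hAR : ∀ n v, A n (R n v) = v := fun n v => (Req n).apply_symm_apply v
  have hRA : ∀ n v, R n (A n v) = v := fun n v => (Req n).symm_apply_apply v
  have hRbound : ∀ n v, ‖R n v‖ ≤ C * ‖v‖ := by
    intro n v
    have h := key n (R n v)
    rwa [← hAapp, hAR] at h
  -- scalar quantities
  have hsq : lam.re * lam.re + lam.im * lam.im = 1 := by
    have h := Complex.sq_norm lam
    rw [hlam] at h
    rw [← Complex.normSq_apply]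
    nlinarith [h]
  have hre2 : lam.re ≤ 1 := by nlinarith [sq_nonneg (lam.re - 1)]
  have hre1 : lam.re < 1 := by
    rcases lt_or_eq_of_le hre2 with h | h
    · exact h
    · exfalso
      apply hlam1
      have him : lam.im = 0 := by nlinarith
      exact Complex.ext h him
  set sR : ℝ := 1 - lam.re with hsdef
  have hs0 : 0 < sR := by simp only [hsdef]; linarith
  set μ : ℕ → ℂ := fun n => lam - 1 + (q n : ℂ) with hμ
  have hμ0 : ∀ n, μ n ≠ 0 := by
    intro n h
    have hl : lam = ((1 - q n : ℝ) : ℂ) := by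
      push_cast
      simp only [hμ] at h
      linear_combination h
    rw [hl, Complex.norm_real, Real.norm_eq_abs,
      abs_of_nonneg (by linarith [(hq n).1, (hq n).2])] at hlam
    linarith [(hq n).1]
  have hμsq : ∀ n, q n ^ 2 + sR ≤ Complex.normSq (μ n) := by
    intro n
    have hre : (μ n).re = lam.re - 1 + q n := by simp [hμ]
    have him : (μ n).im = lam.im := by simp [hμ]
    rw [Complex.normSq_apply, hre, him]
    nlinarith [(hq n).1, (hq n).2]
  set w : ℕ → ℂ := fun n => (q n : ℂ) / μ n with hw
  have hwsq : ∀ n, ‖w n‖ ^ 2 = q n ^ 2 / Complex.normSq (μ n) := by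
    intro n
    have hns : ‖w n‖ ^ 2 = Complex.normSq (w n) := by
      rw [Complex.sq_norm]
    rw [hns]
    simp only [hw]
    rw [Complex.normSq_div, Complex.normSq_ofReal]
    ring
  set r : ℝ := (1 / 2) / Real.sqrt (1 / 4 + sR) with hr
  have hsqrt0 : 0 < Real.sqrt (1 / 4 + sR) := Real.sqrt_pos.2 (by linarith)
  have hr0 : 0 < r := by positivity
  have hr1 : r < 1 := by
    rw [hr, div_lt_one hsqrt0]
    calc (1/2:ℝ) = Real.sqrt ((1/2)^2) := (Real.sqrt_sq (by norm_num)).symm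
      _ < Real.sqrt (1/4 + sR) := Real.sqrt_lt_sqrt (by positivity) (by nlinarith [hs0])
  have hrsq : r ^ 2 = (1/4) / (1/4 + sR) := by
    rw [hr, div_pow, Real.sq_sqrt (by linarith)]
    norm_num
  have hwr : ∀ n, ‖w n‖ ≤ r := by
    intro n
    have h1 : ‖w n‖ ^ 2 ≤ r ^ 2 := by
      rw [hwsq, hrsq]
      have hμpos : 0 < Complex.normSq (μ n) := Complex.normSq_pos.2 (hμ0 n)
      rw [div_le_div_iff₀ hμpos (by linarith)]
      have hq4 : q n ^ 2 ≤ 1/4 := by nlinarith [(hq n).1, (hq n).2]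
      nlinarith [hμsq n, mul_le_mul_of_nonneg_right hq4 hs0.le]
    nlinarith [norm_nonneg (w n), hr0]
  have hws : ∀ n, ‖w n‖ ≤ q n / Real.sqrt sR := by
    intro n
    have h1 : ‖w n‖ ^ 2 ≤ (q n / Real.sqrt sR) ^ 2 := by
      rw [hwsq, div_pow, Real.sq_sqrt hs0.le]
      have hμpos : 0 < Complex.normSq (μ n) := Complex.normSq_pos.2 (hμ0 n)
      rw [div_le_div_iff₀ hμpos hs0]
      have hsle : sR ≤ Complex.normSq (μ n) := by nlinarith [hμsq n, sq_nonneg (q n)]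
      nlinarith [mul_le_mul_of_nonneg_left hsle (sq_nonneg (q n))]
    have h2 : 0 ≤ q n / Real.sqrt sR := div_nonneg (hq n).1.le (Real.sqrt_nonneg sR)
    nlinarith [norm_nonneg (w n)]
  -- summability
  have hqsum : Summable (fun n => (d : ℝ) * q n) := by
    by_contra h
    rw [tsum_eq_zero_of_not_summable h] at htot
    norm_num at htot
  have hqsum' : Summable q := by
    have h := hqsum.mul_left (d : ℝ)⁻¹
    simpa [← mul_assoc, inv_mul_cancel₀ hd0] using h
  have hdw_bound : ∀ n, ‖(d : ℂ) * (q n : ℂ) * w n‖ ≤ (d : ℝ) * q n * r := by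
    intro n
    rw [norm_mul, norm_mul]
    simp only [Complex.norm_natCast, Complex.norm_real, Real.norm_eq_abs,
      abs_of_nonneg (hq n).1.le]
    exact mul_le_mul_of_nonneg_left (hwr n)
      (mul_nonneg (Nat.cast_nonneg d) (hq n).1.le)
  have hFsummable : Summable (fun n => (d : ℂ) * (q n : ℂ) * w n) :=
    Summable.of_norm_bounded (hqsum.mul_right r) hdw_bound
  set F : ℂ := lam - ∑' n, (d : ℂ) * (q n : ℂ) * w n with hF
  have hFnorm : ‖∑' n, (d : ℂ) * (q n : ℂ) * w n‖ ≤ r := by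
    have h1 : Summable (fun n => ‖(d : ℂ) * (q n : ℂ) * w n‖) :=
      Summable.of_nonneg_of_le (fun n => norm_nonneg _) hdw_bound (hqsum.mul_right r)
    calc ‖∑' n, (d : ℂ) * (q n : ℂ) * w n‖ ≤ ∑' n, ‖(d : ℂ) * (q n : ℂ) * w n‖ :=
          norm_tsum_le_tsum_norm h1
      _ ≤ ∑' n, (d : ℝ) * q n * r := Summable.tsum_le_tsum hdw_bound h1 (hqsum.mul_right r)
      _ = (∑' n, (d : ℝ) * q n) * r := tsum_mul_right
      _ = r := by rw [htot, one_mul]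
  have hF0 : F ≠ 0 := by
    intro h
    have hls : lam = ∑' n, (d : ℂ) * (q n : ℂ) * w n := by
      simp only [hF] at h
      linear_combination h
    rw [hls] at hlam
    linarith [hFnorm.trans_lt hr1, hlam.ge]
  -- further identities
  have hones_comp : ones ∘ ⇑σ.symm = ones := rfl
  have hAones : ∀ n, A n ones = μ n • ones := by
    intro n
    rw [hAapp, hones_comp, ← sub_smul]
    congr 1
    simp only [hμ]
    ring
  have hRones : ∀ n, R n ones = (μ n)⁻¹ • ones := by
    intro n
    have h : A n ((μ n)⁻¹ • ones) = ones := by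
      rw [map_smul, hAones, smul_smul, inv_mul_cancel₀ (hμ0 n), one_smul]
    calc R n ones = R n (A n ((μ n)⁻¹ • ones)) := by rw [h]
      _ = (μ n)⁻¹ • ones := hRA n _
  have hsum_ones : ∀ (c : ℂ), (∑ _j : Fin d, c) = (d : ℂ) * c := by
    intro c
    rw [Finset.sum_const, Finset.card_univ, Fintype.card_fin, nsmul_eq_mul]
  -- the operator lam - T
  set L : (ℂ × lp (fun _ : ℕ => Fin d → ℂ) 1) →L[ℂ] (ℂ × lp (fun _ : ℕ => Fin d → ℂ) 1) :=
    algebraMap ℂ _ lam - T with hL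
  have halg : ∀ f : ℂ × lp (fun _ : ℕ => Fin d → ℂ) 1,
      (algebraMap ℂ ((ℂ × lp (fun _ : ℕ => Fin d → ℂ) 1) →L[ℂ]
        (ℂ × lp (fun _ : ℕ => Fin d → ℂ) 1)) lam) f = lam • f := by
    intro f
    rw [Algebra.algebraMap_eq_smul_one]
    rfl
  have hL1 : ∀ f, (L f).1 = lam * f.1 - (T f).1 := by
    intro f
    simp only [hL, ContinuousLinearMap.sub_apply, halg]
    rfl
  have hL2 : ∀ f n, ((L f).2 : ∀ _ : ℕ, Fin d → ℂ) n
      = lam • (f.2 : ∀ _ : ℕ, Fin d → ℂ) n - ((T f).2 : ∀ _ : ℕ, Fin d → ℂ) n := by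
    intro f n
    have hstep : (L f).2 = lam • f.2 - (T f).2 := by
      rw [hL, ContinuousLinearMap.sub_apply, halg]
      rfl
    rw [hstep, lp.coeFn_sub, Pi.sub_apply, lp.coeFn_smul, Pi.smul_apply]
  -- injectivity
  have hinj : Function.Injective L := by
    have hker : ∀ f, L f = 0 → f = 0 := by
      intro f hf
      set fc : ∀ _ : ℕ, Fin d → ℂ := (f.2 : ∀ _ : ℕ, Fin d → ℂ) with hfc
      have h2 : ∀ n, A n (fc n) = f.1 • (q n : ℂ) • ones := by
        intro n
        have h2' := hL2 f n
        rw [hf] at h2'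
        simp only [Prod.snd_zero, lp.coeFn_zero, Pi.zero_apply] at h2'
        rw [(hT f).2 n, hmul] at h2'
        rw [sub_add_eq_sub_sub] at h2'
        rw [hAapp]
        exact sub_eq_zero.mp h2'.symm
      have h3 : ∀ n, fc n = (f.1 * w n) • ones := by
        intro n
        have hx := congrArg (R n) (h2 n)
        rw [hRA] at hx
        have hsm : R n (f.1 • (q n : ℂ) • ones) = f.1 • (q n : ℂ) • R n ones := by
          show (Req n).symm _ = f.1 • (q n : ℂ) • (Req n).symm ones
          rw [map_smul, map_smul]
        rw [hx, hsm, hRones n, smul_smul, smul_smul]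
        congr 1
        simp only [hw]
        rw [div_eq_mul_inv]
        ring
      have h4 : (T f).1 = f.1 * ∑' n, (d : ℂ) * (q n : ℂ) * w n := by
        rw [(hT f).1]
        rw [show (fun n => (q n : ℂ) * ∑ j, fc n j)
            = fun n => f.1 * ((d : ℂ) * (q n : ℂ) * w n) by
          funext n
          rw [h3 n]
          simp only [honesdef, Pi.smul_apply, smul_eq_mul, mul_one]
          rw [hsum_ones]
          ring]
        exact tsum_mul_left
      have h5 := hL1 f
      rw [hf, h4] at h5
      simp only [Prod.fst_zero] at h5
      have h6 : f.1 * F = 0 := by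
        rw [hF]
        linear_combination -h5
      have h7 : f.1 = 0 := by
        rcases mul_eq_zero.mp h6 with h | h
        · exact h
        · exact absurd h hF0
      have h8 : f.2 = 0 := by
        ext n j
        rw [lp.coeFn_zero]
        have := congrFun (h3 n) j
        simp only [h7, zero_mul, zero_smul, Pi.zero_apply] at this ⊢
        exact this
      exact Prod.ext h7 h8
    intro a b hab
    have : L (a - b) = 0 := by rw [map_sub, hab, sub_self]
    have := hker _ this
    exact sub_eq_zero.mp this
  -- surjectivity
  have hsurj : Function.Surjective L := by
    intro g
    set gc : ∀ _ : ℕ, Fin d → ℂ := (g.2 : ∀ _ : ℕ, Fin d → ℂ) with hgc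
    have hgsum : Summable (fun n => ‖gc n‖) := by
      have h := (lp.memℓp g.2).summable (by norm_num : (0:ℝ) < (1 : ENNReal).toReal)
      simpa using h
    set sn : ℕ → ℂ := fun n => ∑ j, R n (gc n) j with hsn
    have hsb : ∀ n, ‖sn n‖ ≤ ((d:ℝ) * C) * ‖gc n‖ := by
      intro n
      calc ‖sn n‖ ≤ ∑ j, ‖R n (gc n) j‖ := norm_sum_le _ _
        _ ≤ ∑ _j : Fin d, ‖R n (gc n)‖ := Finset.sum_le_sum fun j _ => norm_le_pi_norm _ j
        _ = (d:ℝ) * ‖R n (gc n)‖ := by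
            rw [Finset.sum_const, Finset.card_univ, Fintype.card_fin, nsmul_eq_mul]
        _ ≤ (d:ℝ) * (C * ‖gc n‖) :=
            mul_le_mul_of_nonneg_left (hRbound n _) (Nat.cast_nonneg d)
        _ = ((d:ℝ) * C) * ‖gc n‖ := by ring
    have hssum : Summable (fun n => (q n : ℂ) * sn n) := by
      refine Summable.of_norm_bounded (g := fun n => ((d:ℝ) * C) * ‖gc n‖)
        (hgsum.mul_left _) ?_
      intro n
      rw [norm_mul, Complex.norm_real, Real.norm_eq_abs, abs_of_nonneg (hq n).1.le]
      calc q n * ‖sn n‖ ≤ 1 * ‖sn n‖ :=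
            mul_le_mul_of_nonneg_right (by linarith [(hq n).2]) (norm_nonneg _)
        _ = ‖sn n‖ := one_mul _
        _ ≤ _ := hsb n
    set f0 : ℂ := (g.1 + ∑' n, (q n : ℂ) * sn n) / F with hf0
    set fvec : ∀ _ : ℕ, Fin d → ℂ := fun n => R n (gc n) + (f0 * w n) • ones with hfvec
    have hfb : ∀ n, ‖fvec n‖ ≤ C * ‖gc n‖ + (‖f0‖ / Real.sqrt sR) * q n := by
      intro n
      calc ‖fvec n‖ ≤ ‖R n (gc n)‖ + ‖(f0 * w n) • ones‖ := norm_add_le _ _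
        _ ≤ C * ‖gc n‖ + ‖f0‖ * ‖w n‖ := by
            refine add_le_add (hRbound n _) ?_
            rw [norm_smul, honesnorm, mul_one, norm_mul]
        _ ≤ C * ‖gc n‖ + (‖f0‖ / Real.sqrt sR) * q n := by
            refine add_le_add le_rfl ?_
            calc ‖f0‖ * ‖w n‖ ≤ ‖f0‖ * (q n / Real.sqrt sR) :=
                  mul_le_mul_of_nonneg_left (hws n) (norm_nonneg _)
              _ = (‖f0‖ / Real.sqrt sR) * q n := by ring
    have hmem : Memℓp fvec 1 := by
      apply memℓp_gen
      have hb : Summable (fun n => C * ‖gc n‖ + (‖f0‖ / Real.sqrt sR) * q n) :=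
        (hgsum.mul_left C).add (hqsum'.mul_left _)
      have hsummable : Summable (fun n => ‖fvec n‖) :=
        Summable.of_nonneg_of_le (fun n => norm_nonneg _) hfb hb
      simpa using hsummable
    refine ⟨(f0, ⟨fvec, hmem⟩), ?_⟩
    have hcoe : ((⟨fvec, hmem⟩ : lp (fun _ : ℕ => Fin d → ℂ) 1) : ∀ _ : ℕ, Fin d → ℂ)
        = fvec := rfl
    set f : ℂ × lp (fun _ : ℕ => Fin d → ℂ) 1 := (f0, ⟨fvec, hmem⟩) with hfdef
    have hf1 : f.1 = f0 := rfl
    have hf2 : (f.2 : ∀ _ : ℕ, Fin d → ℂ) = fvec := rfl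
    -- second component
    have hsnd : (L f).2 = g.2 := by
      ext n j
      have h1 := hL2 f n
      rw [(hT f).2 n, hmul, hf2, hf1] at h1
      have h2 : lam • fvec n - ((1 - (q n : ℂ)) • (fvec n ∘ ⇑σ.symm)
          + f0 • (q n : ℂ) • ones) = A n (fvec n) - (f0 * q n) • ones := by
        rw [hAapp, smul_smul, sub_add_eq_sub_sub]
      have h3 : A n (fvec n) = gc n + (f0 * q n) • ones := by
        simp only [hfvec]
        rw [map_add, map_smul]
        have hARn : A n (R n (gc n)) = gc n := hAR n _
        rw [hARn, hAones, smul_smul]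
        congr 2
        simp only [hw]
        field_simp [hμ0 n]
      have h4 : ((L f).2 : ∀ _ : ℕ, Fin d → ℂ) n = gc n := by
        rw [h1, h2, h3]
        abel
      calc ((L f).2 : ∀ _ : ℕ, Fin d → ℂ) n j = gc n j := by rw [h4]
        _ = _ := rfl
    -- first component
    have hfst : (L f).1 = g.1 := by
      rw [hL1, (hT f).1, hf1, hf2]
      have hsum_fvec : ∀ n, (∑ j, fvec n j) = sn n + f0 * ((d:ℂ) * w n) := by
        intro n
        simp only [hfvec, Pi.add_apply, Pi.smul_apply, honesdef, smul_eq_mul, mul_one]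
        rw [Finset.sum_add_distrib, hsum_ones]
        simp only [hsn]
        ring
      have hterm : (fun n => (q n : ℂ) * ∑ j, fvec n j)
          = fun n => (q n : ℂ) * sn n + f0 * ((d:ℂ) * (q n : ℂ) * w n) := by
        funext n
        rw [hsum_fvec n]
        ring
      rw [hterm, Summable.tsum_add hssum (hFsummable.mul_left f0), tsum_mul_left]
      have hf0F : f0 * F = g.1 + ∑' n, (q n : ℂ) * sn n := div_mul_cancel₀ _ hF0
      linear_combination hf0F - f0 * hF
    exact Prod.ext hfst hsnd
  -- conclude
  show IsUnit (algebraMap ℂ _ lam - T)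
  rw [← hL, ContinuousLinearMap.isUnit_iff_bijective]
  exact ⟨hinj, hsurj⟩
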